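/- Let R = K[x_1][x_2;θ_2,δ_2]···[x_N;θ_N,δ_N] be a CGL extension whose presentation has a D-form R_D = D⟨x_1,…,x_N⟩, for a unital subring D ⊆ K, containing the homogeneous prime elements y_1,…,y_N. If Y is the multiplicative set generated by D^× ∪ {y_1,…,y_N}, then R_D[Y^{-1}] ∩ R = R_D, where the intersection is taken inside the localization R[Y^{-1}]. -/

import Mathlib

open scoped Classical

namespace GYint

/-! ## Subalgebras generated by subsets of the generators -/

variable (K : Type) [Field K] {R : Type} [Ring R] [Algebra K R]

/-- The `K`-subalgebra of `R` generated by the generators `x i` with `P i`. -/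
def xAdj {N : ℕ} (x : Fin N → R) (P : Fin N → Prop) : Subalgebra K R :=
  Algebra.adjoin K {r : R | ∃ i : Fin N, P i ∧ r = x i}

/-- `R_k` : the subalgebra generated by the first `k` generators (0-indexed: indices `< k`). -/
def Rk {N : ℕ} (x : Fin N → R) (k : ℕ) : Subalgebra K R :=
  xAdj K x (fun i => (i : ℕ) < k)

/-- The interval subalgebra `R_{[a,b]}` generated by `x_a, …, x_b` (0-indexed, inclusive). -/
def Rint {N : ℕ} (x : Fin N → R) (a b : ℕ) : Subalgebra K R :=
  xAdj K x (fun i => a ≤ (i : ℕ) ∧ (i : ℕ) ≤ b)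

variable {K}

/-- The ordered monomial `x^f = x_1^{f 1} ⋯ x_N^{f N}`. -/
def oMono {N : ℕ} (x : Fin N → R) (f : Fin N → ℕ) : R :=
  ((List.finRange N).map (fun i => x i ^ f i)).prod

/-- Evaluation at `h ∈ (Kˣ)^r` of the character with exponent vector `m`. -/
def charEval {r : ℕ} (h : Fin r → Kˣ) (m : Fin r → ℤ) : Kˣ :=
  ∏ i, h i ^ m i

/-- The multiplicative bicharacter `Ω_t` on `ℤ^N` associated to a multiplicatively
skew-symmetric matrix `t`, with `Ω_t(e_j, e_k) = t j k`. -/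
def omegaU {N : ℕ} (t : Fin N → Fin N → Kˣ) (f g : Fin N → ℤ) : Kˣ :=
  ∏ p : Fin N × Fin N, t p.1 p.2 ^ (f p.1 * g p.2)

/-! ## CGL extensions (quantum nilpotent algebras) -/

/-- An iterated skew polynomial (Ore) presentation
`R = K[x_1][x_2; θ_2, δ_2] ⋯ [x_N; θ_N, δ_N]` of a `K`-algebra `R`, together with the
rational torus action data making it a CGL extension (quantum nilpotent algebra).
Here `θ k` and `δ k` are recorded as maps `R → R` whose restrictions to
`R_{k-1} = K⟨x_1,…,x_{k-1}⟩` are, respectively, a `K`-algebra automorphism (with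
inverse the restriction of `θinv k`) and a `K`-linear locally nilpotent
`θ_k`-derivation; `x k * a = θ k a * x k + δ k a` for `a ∈ R_{k-1}`; the ordered
monomials in the generators form a `K`-basis of `R` (so each `R_k` is a free left
`R_{k-1}`-module with basis the powers of `x_k`); each `x k` is an eigenvector of the
torus `H = (Kˣ)^rk` with character `chi k`; `θ k` is implemented by the torus element
`hElt k`, whose eigenvalue `lam k` on `x k` is not a root of unity, and whose
eigenvalue on `x j` (`j < k`) is `lamM k j`, the multiplicatively skew-symmetric
`λ`-matrix of the presentation. -/
structure CGLExt (K : Type) [Field K] (R : Type) [Ring R] [Algebra K R] (N : ℕ) where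
  x : Fin N → R
  pbw : Module.Basis (Fin N → ℕ) K R
  pbw_eq : ∀ f, pbw f = oMono x f
  rk : ℕ
  act : (Fin rk → Kˣ) →* (R ≃ₐ[K] R)
  chi : Fin N → Fin rk → ℤ
  eigen : ∀ (h : Fin rk → Kˣ) (k : Fin N), act h (x k) = (charEval h (chi k) : K) • x k
  θ : Fin N → R → R
  θinv : Fin N → R → R
  δ : Fin N → R → R
  θ_mem : ∀ k : Fin N, ∀ a ∈ Rk K x (k : ℕ), θ k a ∈ Rk K x (k : ℕ)
  θinv_mem : ∀ k : Fin N, ∀ a ∈ Rk K x (k : ℕ), θinv k a ∈ Rk K x (k : ℕ)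
  δ_mem : ∀ k : Fin N, ∀ a ∈ Rk K x (k : ℕ), δ k a ∈ Rk K x (k : ℕ)
  θ_linear : ∀ (k : Fin N) (s : K), ∀ a ∈ Rk K x (k : ℕ), ∀ b ∈ Rk K x (k : ℕ),
    θ k (s • a + b) = s • θ k a + θ k b
  θ_mul : ∀ k : Fin N, ∀ a ∈ Rk K x (k : ℕ), ∀ b ∈ Rk K x (k : ℕ), θ k (a * b) = θ k a * θ k b
  θ_one : ∀ k : Fin N, θ k 1 = 1
  θ_left_inv : ∀ k : Fin N, ∀ a ∈ Rk K x (k : ℕ), θinv k (θ k a) = a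
  θ_right_inv : ∀ k : Fin N, ∀ a ∈ Rk K x (k : ℕ), θ k (θinv k a) = a
  δ_linear : ∀ (k : Fin N) (s : K), ∀ a ∈ Rk K x (k : ℕ), ∀ b ∈ Rk K x (k : ℕ),
    δ k (s • a + b) = s • δ k a + δ k b
  δ_tw : ∀ k : Fin N, ∀ a ∈ Rk K x (k : ℕ), ∀ b ∈ Rk K x (k : ℕ),
    δ k (a * b) = δ k a * b + θ k a * δ k b
  ore : ∀ k : Fin N, ∀ a ∈ Rk K x (k : ℕ), x k * a = θ k a * x k + δ k a
  δ_nil : ∀ k : Fin N, ∀ a ∈ Rk K x (k : ℕ), ∃ n : ℕ, (δ k)^[n] a = 0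
  hElt : Fin N → Fin rk → Kˣ
  lam : Fin N → Kˣ
  hElt_theta : ∀ k : Fin N, ∀ a ∈ Rk K x (k : ℕ), act (hElt k) a = θ k a
  hElt_lam : ∀ k : Fin N, act (hElt k) (x k) = (lam k : K) • x k
  lam_nru : ∀ (k : Fin N) (n : ℕ), 0 < n → lam k ^ n ≠ 1
  lamM : Fin N → Fin N → Kˣ
  lamM_spec : ∀ k j : Fin N, (j : ℕ) < (k : ℕ) → act (hElt k) (x j) = (lamM k j : K) • x j
  lamM_diag : ∀ k, lamM k k = 1
  lamM_skew : ∀ k j, lamM j k = (lamM k j)⁻¹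

/-- A symmetric CGL extension: additionally `δ_k (x_j) ∈ K⟨x_{j+1},…,x_{k-1}⟩` for all
`j < k` (via the Ore relation, `δ_k(x_j) = x_k x_j - λ_{kj} x_j x_k`), and for each `j`
there is an element `h_j^*` of the torus acting on `x_k` by `λ_{kj}⁻¹` for `k > j` and
on `x_j` by an eigenvalue `λ_j^*` which is not a root of unity. -/
structure SymCGLExt (K : Type) [Field K] (R : Type) [Ring R] [Algebra K R] (N : ℕ)
    extends CGLExt K R N where
  sym_delta : ∀ j k : Fin N, (j : ℕ) < (k : ℕ) →
    x k * x j - (lamM k j : K) • (x j * x k) ∈ Rint K x ((j : ℕ) + 1) ((k : ℕ) - 1)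
  hStar : Fin N → Fin rk → Kˣ
  lamStar : Fin N → Kˣ
  hStar_spec : ∀ j k : Fin N, (j : ℕ) < (k : ℕ) →
    act (hStar j) (x k) = (((lamM k j)⁻¹ : Kˣ) : K) • x k
  hStar_lam : ∀ j : Fin N, act (hStar j) (x j) = (lamStar j : K) • x j
  lamStar_nru : ∀ (j : Fin N) (n : ℕ), 0 < n → lamStar j ^ n ≠ 1

/-- A homogeneous element (`H`-eigenvector with an integral character; `0` is allowed). -/
def IsHomog {N : ℕ} (E : CGLExt K R N) (u : R) : Prop :=
  ∃ m : Fin E.rk → ℤ, ∀ h : Fin E.rk → Kˣ, E.act h u = (charEval h m : K) • u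

/-- `p` is a normal element of the subalgebra `S` : `p S = S p`. -/
def IsNormalIn (S : Subalgebra K R) (p : R) : Prop :=
  (∀ a ∈ S, ∃ b ∈ S, p * a = b * p) ∧ (∀ a ∈ S, ∃ b ∈ S, a * p = p * b)

/-- `p` is a prime element of the subalgebra `S`: a nonzero normal element of `S`
such that `S/(p)` is a domain. -/
def IsPrimeElemIn (S : Subalgebra K R) (p : R) : Prop :=
  p ≠ 0 ∧ p ∈ S ∧ IsNormalIn S p ∧
  ∀ a b : R, a ∈ S → b ∈ S → (∃ c ∈ S, a * b = p * c) →
    (∃ c ∈ S, a = p * c) ∨ (∃ c ∈ S, b = p * c)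

/-! ## Predecessor and successor functions -/

/-- The predecessor function `p(k)` of the level sets of `η` (`⊥` playing the role of `-∞`). -/
noncomputable def predIdx {N : ℕ} {α : Type} (η : Fin N → α) (k : Fin N) : WithBot (Fin N) :=
  (Finset.univ.filter (fun j : Fin N => (j : ℕ) < (k : ℕ) ∧ η j = η k)).max

/-- The successor function `s(k)` of the level sets of `η` (`⊤` playing the role of `+∞`). -/
noncomputable def succIdx {N : ℕ} {α : Type} (η : Fin N → α) (k : Fin N) : WithTop (Fin N) :=
  (Finset.univ.filter (fun j : Fin N => (k : ℕ) < (j : ℕ) ∧ η j = η k)).min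

/-- Iterated successor `s^m(k)`. -/
noncomputable def succIter {N : ℕ} {α : Type} (η : Fin N → α) : ℕ → Fin N → WithTop (Fin N)
  | 0, k => (k : WithTop (Fin N))
  | n + 1, k => WithTop.recTopCoe ⊤ (fun j => succIdx η j) (succIter η n k)

/-- Iterated predecessor `p^m(k)`. -/
noncomputable def predIter {N : ℕ} {α : Type} (η : Fin N → α) : ℕ → Fin N → WithBot (Fin N)
  | 0, k => (k : WithBot (Fin N))
  | n + 1, k => WithBot.recBotCoe ⊥ (fun j => predIdx η j) (predIter η n k)

/-! ## The sequence of homogeneous prime elements, [GY1, Theorem 4.3] -/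

/-- The data of [GY1, Theorem 4.3] for a CGL extension `E`: a function `η : [1,N] → ℤ`,
elements `c_k ∈ R_{k-1}`, and the sequence `y_1, …, y_N` of homogeneous elements defined
by the recursion `y_k = y_{p(k)} x_k - c_k` (resp. `y_k = x_k` when `p(k) = -∞`) such that
for every `k`, `{y_j : j ≤ k, s(j) > k}` is a list of the homogeneous prime elements of
`R_k` up to scalar multiples. -/
structure YSystem {N : ℕ} (E : CGLExt K R N) where
  η : Fin N → ℤ
  y : Fin N → R
  c : Fin N → R
  c_mem : ∀ k : Fin N, c k ∈ Rk K E.x (k : ℕ)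
  y_rec : ∀ k j : Fin N, predIdx η k = (j : WithBot (Fin N)) → y k = y j * E.x k - c k
  y_base : ∀ k : Fin N, predIdx η k = ⊥ → y k = E.x k
  y_homog : ∀ k : Fin N, IsHomog E (y k)
  y_prime : ∀ k j : Fin N, (j : ℕ) ≤ (k : ℕ) →
    (∀ l : Fin N, succIdx η j = (l : WithTop (Fin N)) → (k : ℕ) < (l : ℕ)) →
    IsPrimeElemIn (Rk K E.x ((k : ℕ) + 1)) (y j)
  y_complete : ∀ (k : Fin N) (u : R), IsHomog E u →
    IsPrimeElemIn (Rk K E.x ((k : ℕ) + 1)) u →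
    ∃ j : Fin N, (j : ℕ) ≤ (k : ℕ) ∧
      (∀ l : Fin N, succIdx η j = (l : WithTop (Fin N)) → (k : ℕ) < (l : ℕ)) ∧
      ∃ t : Kˣ, u = (t : K) • y j

/-! ## Leading terms -/

/-- The reverse lexicographic order `f ≺ g` on exponent vectors. -/
def revLexLt {N : ℕ} (f g : Fin N → ℕ) : Prop :=
  ∃ n : Fin N, f n < g n ∧ ∀ m : Fin N, n < m → f m = g m

/-- `b` has leading term `t x^f` with respect to the PBW basis and `≺`. -/
def IsLeadingTerm {N : ℕ} (E : CGLExt K R N) (b : R) (t : K) (f : Fin N → ℕ) : Prop :=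
  t ≠ 0 ∧ E.pbw.repr b f = t ∧
    ∀ g : Fin N → ℕ, E.pbw.repr b g ≠ 0 → g = f ∨ revLexLt g f

/-! ## Interval prime elements of symmetric CGL extensions -/

/-- The `{0,1}`-vector (as natural numbers) supported on the `η`-chain from `a` to `b`,
i.e. on `{l : a ≤ l ≤ b, η l = η a}`; for `b = s^m(a)` this is the exponent vector of
`x_a x_{s(a)} ⋯ x_{s^m(a)}`, i.e. `e_{[a,b]}`. -/
noncomputable def chainIndN {N : ℕ} {α : Type} (η : Fin N → α) (a b : Fin N) : Fin N → ℕ :=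
  fun l => if a ≤ l ∧ l ≤ b ∧ η l = η a then 1 else 0

/-- Integer version of `chainIndN`, the vector `e_{[a,b]} ∈ ℤ^N`. -/
noncomputable def chainIndZ {N : ℕ} {α : Type} (η : Fin N → α) (a b : Fin N) : Fin N → ℤ :=
  fun l => if a ≤ l ∧ l ≤ b ∧ η l = η a then 1 else 0

/-- The standard basis vector `e_i ∈ ℤ^N`. -/
def eVecZ {N : ℕ} (i : Fin N) : Fin N → ℤ := fun l => if l = i then 1 else 0

/-- The vector `ē_j = e_j + e_{p(j)} + ⋯ + e_{p^{O_-(j)}(j)} ∈ ℤ^N`. -/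
noncomputable def ebarZ {N : ℕ} {α : Type} (η : Fin N → α) (j : Fin N) : Fin N → ℤ :=
  fun l => if l ≤ j ∧ η l = η j then 1 else 0

/-- The interval prime elements `y_{[i, s^m(i)]}` of a symmetric CGL extension
([GYbig, Theorem 5.1]): for all `i` and `m ≥ 0` with `s^m(i) ∈ [1,N]`, the element
`yI i (s^m(i))` is the unique homogeneous prime element of the interval subalgebra
`R_{[i, s^m(i)]}` with leading term `x_i x_{s(i)} ⋯ x_{s^m(i)}`. -/
structure IntervalYSystem {N : ℕ} (E : SymCGLExt K R N) (Y : YSystem E.toCGLExt) where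
  yI : Fin N → Fin N → R
  homog : ∀ i k : Fin N, IsHomog E.toCGLExt (yI i k)
  prime : ∀ (i : Fin N) (m : ℕ) (k : Fin N), succIter Y.η m i = (k : WithTop (Fin N)) →
    IsPrimeElemIn (Rint K E.x (i : ℕ) (k : ℕ)) (yI i k)
  lt : ∀ (i : Fin N) (m : ℕ) (k : Fin N), succIter Y.η m i = (k : WithTop (Fin N)) →
    IsLeadingTerm E.toCGLExt (yI i k) 1 (chainIndN Y.η i k)

/-- `y_{[j,k]}` extended by the convention `y_{[s(i), i]} = 1`. -/
def yIext {N : ℕ} (E : SymCGLExt K R N) (Y : YSystem E.toCGLExt)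
    (YI : IntervalYSystem E Y) (j k : Fin N) : R :=
  if (k : ℕ) < (j : ℕ) then 1 else YI.yI j k

/-- The normal elements `u_{[i,s^m(i)]}` of [GYbig, Corollary 5.11]: here `j = s(i)`,
`k' = s^{m-1}(i)`, `k = s^m(i)` and
`u = y_{[i,k']} y_{[j,k]} - Ω_λ(e_i, e_{[j,k']}) y_{[j,k']} y_{[i,k]}`. -/
noncomputable def uElem {N : ℕ} (E : SymCGLExt K R N) (Y : YSystem E.toCGLExt)
    (YI : IntervalYSystem E Y) (i j k' k : Fin N) : R :=
  YI.yI i k' * YI.yI j k -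
    (omegaU E.lamM (eVecZ i) (chainIndZ Y.η j k') : K) • (yIext E Y YI j k' * YI.yI i k)

/-! ## Conditions (A) and (B) and the normalization condition -/

/-- Condition (A): a choice of square roots `ν_{kl} = √λ_{kl}` in `K` such that the
subgroup of `Kˣ` they generate contains no elements of order 2. -/
structure CondA {N : ℕ} (E : CGLExt K R N) where
  ν : Fin N → Fin N → Kˣ
  sq : ∀ k j : Fin N, (j : ℕ) < (k : ℕ) → ν k j ^ 2 = E.lamM k j
  diag : ∀ k, ν k k = 1
  skew : ∀ k j, ν j k = (ν k j)⁻¹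
  no_order_two : ∀ t ∈ Subgroup.closure {u : Kˣ | ∃ k j : Fin N, u = ν k j},
    t ^ 2 = 1 → t = 1

/-- Condition (B): positive integers `d_n`, `n ∈ η([1,N])`, with
`λ_k^{d_{η(l)}} = λ_l^{d_{η(k)}}` whenever `p(k), p(l) ≠ -∞`. -/
def CondB {N : ℕ} (E : CGLExt K R N) (η : Fin N → ℤ) (d : ℤ → ℕ) : Prop :=
  (∀ k : Fin N, 0 < d (η k)) ∧
  ∀ k l : Fin N, predIdx η k ≠ ⊥ → predIdx η l ≠ ⊥ →
    E.lam k ^ d (η l) = E.lam l ^ d (η k)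

/-- The symmetrization scalar `S_ν(f) = ∏_{j<k} ν_{jk}^{-f_j f_k}`. -/
def Snu {N : ℕ} (ν : Fin N → Fin N → Kˣ) (f : Fin N → ℤ) : Kˣ :=
  ∏ p : Fin N × Fin N,
    if (p.1 : ℕ) < (p.2 : ℕ) then ν p.1 p.2 ^ (-(f p.1 * f p.2)) else 1

/-- The normalization condition (6.6) of [GYbig]: the leading coefficient
`π_{[i,s(i)]}` of `u_{[i,s(i)]}` equals `S_ν(-e_i + f_{[i,s(i)]})` for all `i` with
`s(i) ≠ +∞`, where `f_{[i,s(i)]}` is the exponent of the leading term of `u_{[i,s(i)]}`. -/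
def NormCond {N : ℕ} (E : SymCGLExt K R N) (CA : CondA E.toCGLExt)
    (Y : YSystem E.toCGLExt) (YI : IntervalYSystem E Y) : Prop :=
  ∀ i j : Fin N, succIdx Y.η i = (j : WithTop (Fin N)) →
    ∃ f : Fin N → ℕ,
      IsLeadingTerm E.toCGLExt (uElem E Y YI i j i j)
        ((Snu CA.ν (fun l => (f l : ℤ) - eVecZ i l) : Kˣ) : K) f

/-! ## D-forms -/

variable (K)

/-- `t` is a unit of the subring `D ⊆ K`. -/
def isUnitIn (D : Subring K) (t : K) : Prop := t ∈ D ∧ t ≠ 0 ∧ t⁻¹ ∈ D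

/-- The `D`-subring of `R` generated by `D` and the generators `x i` with `P i`. -/
def Dspan (D : Subring K) {N : ℕ} (x : Fin N → R) (P : Fin N → Prop) : Subring R :=
  Subring.closure ((algebraMap K R) '' (D : Set K) ∪ {r : R | ∃ i : Fin N, P i ∧ r = x i})

/-- `(R_D)_k = D⟨x_1,…,x_k⟩` (0-indexed: indices `< k`). -/
def DRk (D : Subring K) {N : ℕ} (x : Fin N → R) (k : ℕ) : Subring R :=
  Dspan K D x (fun i => (i : ℕ) < k)

/-- `R_D = D⟨x_1,…,x_N⟩`. -/
def DRfull (D : Subring K) {N : ℕ} (x : Fin N → R) : Subring R :=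
  Dspan K D x (fun _ => True)

/-- `(R_D)_{[a,b]} = D⟨x_a,…,x_b⟩` (0-indexed, inclusive). -/
def DRint (D : Subring K) {N : ℕ} (x : Fin N → R) (a b : ℕ) : Subring R :=
  Dspan K D x (fun i => a ≤ (i : ℕ) ∧ (i : ℕ) ≤ b)

variable {K}

/-- `D⟨x_1,…,x_N⟩` is a `D`-form of the CGL presentation `E`, i.e. it is an iterated
skew polynomial extension `D[x_1][x_2;θ_2,δ_2]⋯[x_N;θ_N,δ_N]`: each `θ_k` restricts
to an automorphism of `D⟨x_1,…,x_{k-1}⟩`, and each `δ_k` maps `D⟨x_1,…,x_{k-1}⟩`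
into itself. -/
structure IsDForm (D : Subring K) {N : ℕ} (E : CGLExt K R N) : Prop where
  theta_mem : ∀ k : Fin N, ∀ a ∈ Rk K E.x (k : ℕ),
    a ∈ DRk K D E.x (k : ℕ) → E.θ k a ∈ DRk K D E.x (k : ℕ)
  thetainv_mem : ∀ k : Fin N, ∀ a ∈ Rk K E.x (k : ℕ),
    a ∈ DRk K D E.x (k : ℕ) → E.θinv k a ∈ DRk K D E.x (k : ℕ)
  delta_mem : ∀ k : Fin N, ∀ a ∈ Rk K E.x (k : ℕ),
    a ∈ DRk K D E.x (k : ℕ) → E.δ k a ∈ DRk K D E.x (k : ℕ)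

/-- `D ⊆ K` has `K` as its field of fractions. -/
def IsFractionFieldOf (D : Subring K) : Prop :=
  ∀ z : K, ∃ a ∈ D, ∃ b ∈ D, b ≠ 0 ∧ z = a / b

/-- `p` is a normal element of the subring `S` : `p S = S p`. -/
def IsNormalInSR (S : Subring R) (p : R) : Prop :=
  (∀ a ∈ S, ∃ b ∈ S, p * a = b * p) ∧ (∀ a ∈ S, ∃ b ∈ S, a * p = p * b)

/-- `T` is a denominator (two-sided Ore) set in the subring `S` of the domain `R`. -/
def IsDenomSetIn (S : Subring R) (T : Submonoid R) : Prop :=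
  ((T : Set R) ⊆ (S : Set R)) ∧ (0 : R) ∉ T ∧
  (∀ a ∈ S, ∀ s ∈ T, ∃ b ∈ S, ∃ t ∈ T, t * a = b * s) ∧
  (∀ a ∈ S, ∀ s ∈ T, ∃ b ∈ S, ∃ t ∈ T, a * t = s * b)

/-! ## The permutations `Ξ_N` and `Γ_N` -/

/-- The set `Ξ_N ⊆ S_N` of permutations `σ` such that `σ([1,k])` is an interval for
all `k`. -/
def XiN {N : ℕ} : Set (Equiv.Perm (Fin N)) :=
  {σ | ∀ k a b c : Fin N, a ≤ k → b ≤ k → σ a ≤ c → c ≤ σ b → ∃ m : Fin N, m ≤ k ∧ σ m = c}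

/-- The value at position `k` (0-indexed) of the permutation
`σ_{i,j} = [i+1, …, j, i, j+1, …, N, i-1, …, 1]` (here expressed 0-indexed). -/
def gammaVal (N i j : ℕ) (k : Fin N) : ℕ :=
  if (k : ℕ) < j - i then i + 1 + (k : ℕ)
  else if (k : ℕ) = j - i then i
  else if (k : ℕ) ≤ N - 1 - i then (k : ℕ) + i
  else N - 1 - (k : ℕ)

/-- The subset `Γ_N = {σ_{i,j} : i ≤ j} ⊆ Ξ_N`. -/
def GammaN {N : ℕ} : Set (Equiv.Perm (Fin N)) :=
  {σ | ∃ i j : ℕ, i ≤ j ∧ j < N ∧ ∀ k : Fin N, (σ k : ℕ) = gammaVal N i j k}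


/-! ## Auxiliary development for the proof of `loc_intersection` -/

section LocAux

variable {K : Type} [Field K] {R : Type} [Ring R] [Algebra K R] {N : ℕ}

/-- Weak reverse-lex order. -/
def rll (f g : Fin N → ℕ) : Prop := f = g ∨ revLexLt f g

lemma rll_refl (f : Fin N → ℕ) : rll f f := Or.inl rfl

lemma revLexLt_trans {f g h : Fin N → ℕ} (h1 : revLexLt f g) (h2 : revLexLt g h) :
    revLexLt f h := by
  obtain ⟨n1, hlt1, heq1⟩ := h1
  obtain ⟨n2, hlt2, heq2⟩ := h2
  rcases lt_trichotomy n1 n2 with hc | hc | hc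
  · exact ⟨n2, by rw [heq1 n2 hc]; exact hlt2,
      fun m hm => (heq1 m (hc.trans hm)).trans (heq2 m hm)⟩
  · subst hc
    exact ⟨n1, hlt1.trans hlt2, fun m hm => (heq1 m hm).trans (heq2 m hm)⟩
  · exact ⟨n1, by rw [← heq2 n1 hc]; exact hlt1,
      fun m hm => (heq1 m hm).trans (heq2 m (hc.trans hm))⟩

lemma revLexLt_irrefl (f : Fin N → ℕ) : ¬ revLexLt f f := by
  rintro ⟨n, hn, -⟩; exact lt_irrefl _ hn

lemma revLexLt_total {f g : Fin N → ℕ} (hne : f ≠ g) : revLexLt f g ∨ revLexLt g f := by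
  classical
  set s := Finset.univ.filter (fun i : Fin N => f i ≠ g i) with hs
  have hsne : s.Nonempty := by
    by_contra hc
    apply hne; funext i
    by_contra hi
    exact hc ⟨i, by simp [hs, hi]⟩
  set n := s.max' hsne with hn
  have hmem : n ∈ s := s.max'_mem hsne
  have hne' : f n ≠ g n := by simpa [hs] using (Finset.mem_filter.1 hmem).2
  have heq : ∀ m, n < m → f m = g m := by
    intro m hm
    by_contra hc
    exact absurd (s.le_max' m (by simp [hs, hc])) (not_le.2 hm)
  rcases lt_or_gt_of_ne hne' with h | h
  · exact Or.inl ⟨n, h, heq⟩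
  · exact Or.inr ⟨n, h, fun m hm => (heq m hm).symm⟩

lemma rll_trans {f g h : Fin N → ℕ} (h1 : rll f g) (h2 : rll g h) : rll f h := by
  rcases h1 with rfl | h1
  · exact h2
  · rcases h2 with rfl | h2
    · exact Or.inr h1
    · exact Or.inr (revLexLt_trans h1 h2)

lemma revLexLt_add_right {f g : Fin N → ℕ} (h : revLexLt f g) (w : Fin N → ℕ) :
    revLexLt (f + w) (g + w) := by
  obtain ⟨n, hn, he⟩ := h
  exact ⟨n, by simpa using Nat.add_lt_add_right hn (w n), fun m hm => by simp [he m hm]⟩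

lemma revLexLt_add_left {f g : Fin N → ℕ} (h : revLexLt f g) (w : Fin N → ℕ) :
    revLexLt (w + f) (w + g) := by
  obtain ⟨n, hn, he⟩ := h
  exact ⟨n, by simpa using Nat.add_lt_add_left hn (w n), fun m hm => by simp [he m hm]⟩

lemma rll_add {f g f' g' : Fin N → ℕ} (h : rll f g) (h' : rll f' g') :
    rll (f + f') (g + g') := by
  rcases h with rfl | h
  · rcases h' with rfl | h'
    · exact rll_refl _
    · exact Or.inr (revLexLt_add_left h' f)
  · rcases h' with rfl | h'
    · exact Or.inr (revLexLt_add_right h f')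
    · exact Or.inr (revLexLt_trans (revLexLt_add_right h f') (revLexLt_add_left h' g))

lemma rll_add_strict {f g f' g' : Fin N → ℕ} (h : rll f g) (h' : rll f' g')
    (hne : ¬ (f = g ∧ f' = g')) : revLexLt (f + f') (g + g') := by
  rcases h with rfl | h
  · rcases h' with rfl | h'
    · exact absurd ⟨rfl, rfl⟩ hne
    · exact revLexLt_add_left h' f
  · rcases h' with rfl | h'
    · exact revLexLt_add_right h f'
    · exact revLexLt_trans (revLexLt_add_right h f') (revLexLt_add_left h' g)

lemma rll_supp {k : ℕ} {f w : Fin N → ℕ} (h : rll f w)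
    (hw : ∀ i : Fin N, k ≤ (i : ℕ) → w i = 0) :
    ∀ i : Fin N, k ≤ (i : ℕ) → f i = 0 := by
  rcases h with rfl | ⟨n, hn, he⟩
  · exact hw
  · have hnk : (n : ℕ) < k := by
      by_contra hc
      rw [hw n (not_lt.1 hc)] at hn
      exact Nat.not_lt_zero _ hn
    intro i hi
    have hni : n < i := by
      have : (n : ℕ) < (i : ℕ) := lt_of_lt_of_le hnk hi
      exact this
    rw [he i hni]
    exact hw i hi

lemma exists_rll_max (s : Finset (Fin N → ℕ)) (hs : s.Nonempty) :
    ∃ f ∈ s, ∀ g ∈ s, rll g f := by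
  classical
  induction s using Finset.induction_on with
  | empty => exact absurd hs (by simp)
  | @insert a t ha ih =>
    rcases t.eq_empty_or_nonempty with rfl | ht
    · exact ⟨a, by simp, by simp [rll_refl]⟩
    · obtain ⟨f, hf, hmax⟩ := ih ht
      have htot : rll f a ∨ rll a f := by
        by_cases h : f = a
        · exact Or.inl (Or.inl h)
        · rcases revLexLt_total h with h' | h'
          · exact Or.inl (Or.inr h')
          · exact Or.inr (Or.inr h')
      rcases htot with hfa | haf
      · refine ⟨a, Finset.mem_insert_self _ _, ?_⟩
        intro g hg
        rcases Finset.mem_insert.1 hg with rfl | hg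
        · exact rll_refl g
        · exact rll_trans (hmax g hg) hfa
      · refine ⟨f, Finset.mem_insert_of_mem hf, ?_⟩
        intro g hg
        rcases Finset.mem_insert.1 hg with rfl | hg
        · exact haf
        · exact hmax g hg

lemma slow_basic {e v : Fin N → ℕ} (κ : Fin N) (he : ∀ i : Fin N, (κ : ℕ) < (i : ℕ) → e i = 0)
    (hv : ∀ i : Fin N, (κ : ℕ) < (i : ℕ) → v i = 0) (hlt : e κ < v κ) : revLexLt e v :=
  ⟨κ, hlt, fun m hm => by rw [he m hm, hv m hm]⟩

/-! ### Monomial lemmas -/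

lemma oMono_eq_one (x : Fin N → R) (f : Fin N → ℕ) (hf : ∀ i, f i = 0) :
    oMono x f = 1 := by
  unfold oMono
  apply List.prod_eq_one
  intro r hr
  obtain ⟨i, -, rfl⟩ := List.mem_map.1 hr
  rw [hf i, pow_zero]

lemma oMono_mul_pow (x : Fin N → R) (f : Fin N → ℕ) (κ : Fin N) (n : ℕ)
    (hf : ∀ j : Fin N, κ ≤ j → f j = 0) :
    oMono x (f + fun j => if j = κ then n else 0) = oMono x f * x κ ^ n := by
  obtain ⟨l₁, l₂, hl⟩ := List.append_of_mem (List.mem_finRange κ)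
  have hpw := List.pairwise_lt_finRange N
  rw [hl] at hpw
  have hpw' := List.pairwise_append.1 hpw
  have h1 : ∀ j ∈ l₁, j < κ := fun j hj => hpw'.2.2 j hj κ List.mem_cons_self
  have h2 : ∀ j ∈ l₂, κ < j := fun j hj => (List.pairwise_cons.1 hpw'.2.1).1 j hj
  have hfκ : f κ = 0 := hf κ le_rfl
  have e2 : ∀ g : Fin N → ℕ, (∀ j ∈ l₂, g j = 0) →
      (l₂.map fun i => x i ^ g i).prod = 1 := by
    intro g hg
    apply List.prod_eq_one
    intro r hr
    obtain ⟨i, hi, rfl⟩ := List.mem_map.1 hr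
    rw [hg i hi, pow_zero]
  have e1 : (l₁.map fun i => x i ^ (f + fun j => if j = κ then n else 0) i)
      = l₁.map fun i => x i ^ f i := by
    apply List.map_congr_left
    intro j hj
    have hjκ : j ≠ κ := ne_of_lt (h1 j hj)
    simp [hjκ]
  unfold oMono
  rw [hl, List.map_append, List.map_cons, List.prod_append, List.prod_cons,
      List.map_append, List.map_cons, List.prod_append, List.prod_cons]
  rw [e1, e2 _ (fun j hj => by
        have : κ ≤ j := le_of_lt (h2 j hj)
        simp [hf j this, ne_of_gt (h2 j hj)]),
      e2 f (fun j hj => hf j (le_of_lt (h2 j hj)))]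
  have : (f + fun j => if j = κ then n else 0) κ = n := by simp [hfκ]
  rw [this, hfκ, pow_zero, mul_one, mul_one, mul_one]

variable (E : CGLExt K R N) (D : Subring K)

lemma pbw_mul_pow (f : Fin N → ℕ) (κ : Fin N) (n : ℕ)
    (hf : ∀ j : Fin N, κ ≤ j → f j = 0) :
    E.pbw f * E.x κ ^ n = E.pbw (f + fun j => if j = κ then n else 0) := by
  rw [E.pbw_eq, E.pbw_eq, oMono_mul_pow E.x f κ n hf]

lemma pbw_zero' (f : Fin N → ℕ) (hf : ∀ i, f i = 0) : E.pbw f = 1 := by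
  rw [E.pbw_eq]; exact oMono_eq_one E.x f hf

lemma x_eq_pbw (κ : Fin N) :
    E.x κ = E.pbw (fun j => if j = κ then 1 else 0) := by
  have h := pbw_mul_pow E 0 κ 1 (fun j _ => rfl)
  rw [pbw_zero' E 0 (fun _ => rfl), one_mul, pow_one] at h
  rw [h]
  congr 1
  funext j
  simp

lemma repr_algebraMap (t : K) :
    E.pbw.repr (algebraMap K R t) = Finsupp.single 0 t := by
  have h1 : algebraMap K R t = t • (1 : R) := Algebra.algebraMap_eq_smul_one t
  have h0 : (1 : R) = E.pbw 0 := (pbw_zero' E 0 (fun _ => rfl)).symm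
  rw [h1, h0, map_smul, E.pbw.repr_self, Finsupp.smul_single, smul_eq_mul, mul_one]

/-! ### Coefficient predicates -/

/-- All PBW coefficients lie in `D`. -/
def DCf (r : R) : Prop := ∀ f, E.pbw.repr r f ∈ D

/-- The PBW support only involves the variables `x_i`, `i < k`. -/
def SLt (k : ℕ) (r : R) : Prop :=
  ∀ f, E.pbw.repr r f ≠ 0 → ∀ i : Fin N, k ≤ (i : ℕ) → f i = 0

/-- Coefficients in `D`, support `≼ w`, and the coefficient of `x^w` is a unit of `D`. -/
def LeadU (w : Fin N → ℕ) (r : R) : Prop :=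
  DCf E D r ∧ (∀ f, E.pbw.repr r f ≠ 0 → rll f w) ∧ isUnitIn K D (E.pbw.repr r w)

/-- Coefficients in `D` and support strictly `≺ w`. -/
def SLowD (w : Fin N → ℕ) (r : R) : Prop :=
  DCf E D r ∧ ∀ f, E.pbw.repr r f ≠ 0 → revLexLt f w

variable {E D}

lemma DCf_zero : DCf E D 0 := fun f => by simp [D.zero_mem]

lemma DCf_add {a b : R} (ha : DCf E D a) (hb : DCf E D b) : DCf E D (a + b) := fun f => by
  rw [map_add, Finsupp.add_apply]; exact add_mem (ha f) (hb f)

lemma DCf_smul {c : K} (hc : c ∈ D) {a : R} (ha : DCf E D a) : DCf E D (c • a) := fun f => by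
  rw [map_smul, Finsupp.smul_apply, smul_eq_mul]; exact mul_mem hc (ha f)

lemma DCf_sub {a b : R} (ha : DCf E D a) (hb : DCf E D b) : DCf E D (a - b) := fun f => by
  rw [map_sub, Finsupp.sub_apply]; exact sub_mem (ha f) (hb f)

lemma DCf_sum {ι : Type} (s : Finset ι) (F : ι → R) (h : ∀ i ∈ s, DCf E D (F i)) :
    DCf E D (∑ i ∈ s, F i) :=
  Finset.sum_induction F (DCf E D) (fun _ _ => DCf_add) DCf_zero h

lemma SLowD_zero (w : Fin N → ℕ) : SLowD E D w 0 :=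
  ⟨DCf_zero, fun f hf => absurd (by simp : E.pbw.repr (0 : R) f = 0) hf⟩

lemma SLowD_add {w : Fin N → ℕ} {a b : R} (ha : SLowD E D w a) (hb : SLowD E D w b) :
    SLowD E D w (a + b) := by
  refine ⟨DCf_add ha.1 hb.1, fun f hf => ?_⟩
  rw [map_add, Finsupp.add_apply] at hf
  by_cases h : E.pbw.repr a f = 0
  · rw [h, zero_add] at hf
    exact hb.2 f hf
  · exact ha.2 f h

lemma SLowD_smul {w : Fin N → ℕ} {c : K} (hc : c ∈ D) {a : R} (ha : SLowD E D w a) :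
    SLowD E D w (c • a) := by
  refine ⟨DCf_smul hc ha.1, fun f hf => ?_⟩
  rw [map_smul, Finsupp.smul_apply, smul_eq_mul] at hf
  exact ha.2 f (right_ne_zero_of_mul hf)

lemma SLowD_neg {w : Fin N → ℕ} {a : R} (ha : SLowD E D w a) : SLowD E D w (-a) := by
  have : (-1 : K) • a = -a := by simp
  rw [← this]
  exact SLowD_smul (neg_mem D.one_mem) ha

lemma SLowD_sum {w : Fin N → ℕ} {ι : Type} (s : Finset ι) (F : ι → R)
    (h : ∀ i ∈ s, SLowD E D w (F i)) : SLowD E D w (∑ i ∈ s, F i) :=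
  Finset.sum_induction F (SLowD E D w) (fun _ _ => SLowD_add) (SLowD_zero w) h

lemma isUnitIn_one : isUnitIn K D 1 := ⟨D.one_mem, one_ne_zero, by simpa using D.one_mem⟩

lemma isUnitIn_mul {s t : K} (hs : isUnitIn K D s) (ht : isUnitIn K D t) :
    isUnitIn K D (s * t) :=
  ⟨mul_mem hs.1 ht.1, mul_ne_zero hs.2.1 ht.2.1, by rw [mul_inv]; exact mul_mem hs.2.2 ht.2.2⟩

lemma isUnitIn_pow {s : K} (hs : isUnitIn K D s) (m : ℕ) : isUnitIn K D (s ^ m) := by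
  induction m with
  | zero => simpa using (isUnitIn_one (D := D))
  | succ m ih => rw [pow_succ]; exact isUnitIn_mul ih hs

lemma isUnitIn_listprod (l : List K) (h : ∀ a ∈ l, isUnitIn K D a) :
    isUnitIn K D l.prod := by
  induction l with
  | nil => simpa using (isUnitIn_one (D := D))
  | cons a t ih =>
    rw [List.prod_cons]
    exact isUnitIn_mul (h a List.mem_cons_self) (ih fun b hb => h b (List.mem_cons_of_mem _ hb))

lemma LeadU_pbw (f : Fin N → ℕ) : LeadU E D f (E.pbw f) := by
  refine ⟨?_, ?_, ?_⟩
  · intro g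
    rw [E.pbw.repr_self, Finsupp.single_apply]
    split <;> simp [D.one_mem, D.zero_mem]
  · intro g hg
    rw [E.pbw.repr_self, Finsupp.single_apply] at hg
    split at hg
    · exact Or.inl (Eq.symm ‹f = g›)
    · exact absurd rfl hg
  · rw [E.pbw.repr_self, Finsupp.single_apply, if_pos rfl]
    exact isUnitIn_one

lemma LeadU_smul {w : Fin N → ℕ} {c : K} (hc : isUnitIn K D c) {a : R}
    (ha : LeadU E D w a) : LeadU E D w (c • a) := by
  refine ⟨DCf_smul hc.1 ha.1, fun f hf => ?_, ?_⟩
  · rw [map_smul, Finsupp.smul_apply, smul_eq_mul] at hf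
    exact ha.2.1 f (right_ne_zero_of_mul hf)
  · rw [map_smul, Finsupp.smul_apply, smul_eq_mul]
    exact isUnitIn_mul hc ha.2.2

lemma LeadU_sub_SLowD {w : Fin N → ℕ} {a b : R} (ha : LeadU E D w a) (hb : SLowD E D w b) :
    LeadU E D w (a - b) := by
  have hbw : E.pbw.repr b w = 0 := by
    by_contra hc
    exact revLexLt_irrefl w (hb.2 w hc)
  refine ⟨DCf_sub ha.1 hb.1, fun f hf => ?_, ?_⟩
  · rw [map_sub, Finsupp.sub_apply] at hf
    by_cases h : E.pbw.repr b f = 0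
    · rw [h, sub_zero] at hf
      exact ha.2.1 f hf
    · exact Or.inr (hb.2 f h)
  · rw [map_sub, Finsupp.sub_apply, hbw, sub_zero]
    exact ha.2.2

lemma LeadU_add_SLowD {w : Fin N → ℕ} {a b : R} (ha : LeadU E D w a) (hb : SLowD E D w b) :
    LeadU E D w (a + b) := by
  have := LeadU_sub_SLowD ha (SLowD_neg hb)
  simpa using this

/-! ### Expansion machinery -/

lemma sum_repr (a : R) : (E.pbw.repr a).sum (fun f c => c • E.pbw f) = a := by
  conv_rhs => rw [← E.pbw.linearCombination_repr a]
  rw [Finsupp.linearCombination_apply]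

lemma mul_expand (a b : R) :
    a * b = (E.pbw.repr a).sum fun f c =>
      (E.pbw.repr b).sum fun g d => (c * d) • (E.pbw f * E.pbw g) := by
  conv_lhs => rw [← sum_repr (E := E) a, ← sum_repr (E := E) b]
  rw [Finsupp.sum_mul]
  apply Finsupp.sum_congr
  intro f _
  rw [smul_mul_assoc, Finsupp.mul_sum, Finsupp.smul_sum]
  apply Finsupp.sum_congr
  intro g _
  rw [mul_smul_comm, smul_smul]

lemma mul_prop {P : R → Prop} (h0 : P 0) (hadd : ∀ a b : R, P a → P b → P (a + b))
    (hsm : ∀ c : K, ∀ r : R, P r → P (c • r)) (a b : R)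
    (hab : ∀ f g, E.pbw.repr a f ≠ 0 → E.pbw.repr b g ≠ 0 → P (E.pbw f * E.pbw g)) :
    P (a * b) := by
  rw [mul_expand (E := E) a b]
  apply Finset.sum_induction _ _ hadd h0
  intro f hf
  apply Finset.sum_induction _ _ hadd h0
  intro g hg
  exact hsm _ _ (hab f g (Finsupp.mem_support_iff.1 hf) (Finsupp.mem_support_iff.1 hg))

lemma repr_mul_left (r b : R) (e0 : Fin N → ℕ) :
    E.pbw.repr (r * b) e0 =
      (E.pbw.repr r).sum fun f c => c * E.pbw.repr (E.pbw f * b) e0 := by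
  conv_lhs => rw [← sum_repr (E := E) r, Finsupp.sum_mul]
  rw [map_finsuppSum, Finsupp.sum_apply]
  apply Finsupp.sum_congr
  intro f _
  rw [smul_mul_assoc, map_smul, Finsupp.smul_apply, smul_eq_mul]

lemma repr_mul_right (b r : R) (e0 : Fin N → ℕ) :
    E.pbw.repr (b * r) e0 =
      (E.pbw.repr r).sum fun g d => d * E.pbw.repr (b * E.pbw g) e0 := by
  conv_lhs => rw [← sum_repr (E := E) r, Finsupp.mul_sum]
  rw [map_finsuppSum, Finsupp.sum_apply]
  apply Finsupp.sum_congr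
  intro g _
  rw [mul_smul_comm, map_smul, Finsupp.smul_apply, smul_eq_mul]

/-! ### Right multiplication by a power of a generator -/

lemma mul_pow_eq_mapDomain (a : R) (κ : Fin N) (n : ℕ) (ha : SLt E (κ : ℕ) a) :
    E.pbw.repr (a * E.x κ ^ n) =
      Finsupp.mapDomain (fun f => f + fun j => if j = κ then n else 0) (E.pbw.repr a) := by
  have h1 : a * E.x κ ^ n =
      (E.pbw.repr a).sum fun f c => c • E.pbw (f + fun j => if j = κ then n else 0) := by
    conv_lhs => rw [← sum_repr (E := E) a]
    rw [Finsupp.sum_mul]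
    apply Finsupp.sum_congr
    intro f hf
    rw [smul_mul_assoc,
      pbw_mul_pow E f κ n (fun j hj => ha f (Finsupp.mem_support_iff.1 hf) j hj)]
  rw [h1, map_finsuppSum, Finsupp.mapDomain]
  apply Finsupp.sum_congr
  intro f _
  rw [map_smul, E.pbw.repr_self, Finsupp.smul_single, smul_eq_mul, mul_one]

lemma shift_injective (κ : Fin N) (n : ℕ) :
    Function.Injective (fun f : Fin N → ℕ => f + fun j => if j = κ then n else 0) :=
  fun f g hfg => by
    funext j
    have := congrFun hfg j
    simpa using this

lemma LeadU_shift {w : Fin N → ℕ} {a : R} (κ : Fin N) (n : ℕ)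
    (hw : ∀ i : Fin N, (κ : ℕ) ≤ (i : ℕ) → w i = 0) (h : LeadU E D w a) :
    LeadU E D (w + fun j => if j = κ then n else 0) (a * E.x κ ^ n) := by
  have hsupp : SLt E (κ : ℕ) a := fun f hf i hi => rll_supp (h.2.1 f hf) hw i hi
  have hr := mul_pow_eq_mapDomain (E := E) a κ n hsupp
  have hinj := shift_injective (N := N) κ n
  refine ⟨?_, ?_, ?_⟩
  · intro f
    rw [hr]
    by_cases hf : f ∈ Set.range (fun g : Fin N → ℕ => g + fun j => if j = κ then n else 0)
    · obtain ⟨g, rfl⟩ := hf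
      rw [Finsupp.mapDomain_apply hinj]
      exact h.1 g
    · rw [Finsupp.mapDomain_notin_range _ _ hf]
      exact D.zero_mem
  · intro f hf
    rw [hr] at hf
    have hmem := Finsupp.mapDomain_support (Finsupp.mem_support_iff.2 hf)
    obtain ⟨g, hg, rfl⟩ := Finset.mem_image.1 hmem
    exact rll_add (h.2.1 g (Finsupp.mem_support_iff.1 hg)) (rll_refl _)
  · rw [hr, Finsupp.mapDomain_apply hinj]
    exact h.2.2

lemma SLowD_shift {a : R} (κ : Fin N) (m : ℕ) (v : Fin N → ℕ)
    (ha : DCf E D a) (hs : SLt E (κ : ℕ) a)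
    (hv : ∀ i : Fin N, (κ : ℕ) < (i : ℕ) → v i = 0) (hm : m < v κ) :
    SLowD E D v (a * E.x κ ^ m) := by
  have hr := mul_pow_eq_mapDomain (E := E) a κ m hs
  have hinj := shift_injective (N := N) κ m
  refine ⟨?_, ?_⟩
  · intro f
    rw [hr]
    by_cases hf : f ∈ Set.range (fun g : Fin N → ℕ => g + fun j => if j = κ then m else 0)
    · obtain ⟨g, rfl⟩ := hf
      rw [Finsupp.mapDomain_apply hinj]
      exact ha g
    · rw [Finsupp.mapDomain_notin_range _ _ hf]
      exact D.zero_mem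
  · intro f hf
    rw [hr] at hf
    have hmem := Finsupp.mapDomain_support (Finsupp.mem_support_iff.2 hf)
    obtain ⟨g, hg, rfl⟩ := Finset.mem_image.1 hmem
    have hg0 : ∀ i : Fin N, (κ : ℕ) ≤ (i : ℕ) → g i = 0 :=
      fun i hi => hs g (Finsupp.mem_support_iff.1 hg) i hi
    apply slow_basic κ
    · intro i hi
      have hne : i ≠ κ := by
        intro h
        subst h
        exact absurd hi (lt_irrefl _)
      simp [hg0 i (le_of_lt hi), hne]
    · exact hv
    · simpa [hg0 κ le_rfl] using hm

/-! ### Membership lemmas -/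

lemma x_mem_Rk {i : Fin N} {k : ℕ} (hi : (i : ℕ) < k) : E.x i ∈ Rk K E.x k := by
  unfold Rk xAdj
  exact Algebra.subset_adjoin ⟨i, hi, rfl⟩

lemma x_mem_DRk {i : Fin N} {k : ℕ} (hi : (i : ℕ) < k) : E.x i ∈ DRk K D E.x k := by
  unfold DRk Dspan
  exact Subring.subset_closure (Or.inr ⟨i, hi, rfl⟩)

lemma x_mem_DRfull (i : Fin N) : E.x i ∈ DRfull K D E.x := by
  unfold DRfull Dspan
  exact Subring.subset_closure (Or.inr ⟨i, trivial, rfl⟩)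

lemma algebraMap_mem_DRk {t : K} (ht : t ∈ D) (k : ℕ) :
    algebraMap K R t ∈ DRk K D E.x k := by
  unfold DRk Dspan
  exact Subring.subset_closure (Or.inl ⟨t, ht, rfl⟩)

lemma algebraMap_mem_DRfull {t : K} (ht : t ∈ D) :
    algebraMap K R t ∈ DRfull K D E.x := by
  unfold DRfull Dspan
  exact Subring.subset_closure (Or.inl ⟨t, ht, rfl⟩)

lemma pbw_mem_Rk (g : Fin N → ℕ) (k : ℕ) (hg : ∀ i : Fin N, k ≤ (i : ℕ) → g i = 0) :
    E.pbw g ∈ Rk K E.x k := by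
  rw [E.pbw_eq]
  unfold oMono
  apply Subalgebra.list_prod_mem
  intro r hr
  obtain ⟨i, -, rfl⟩ := List.mem_map.1 hr
  by_cases h : g i = 0
  · rw [h, pow_zero]; exact one_mem _
  · refine pow_mem (x_mem_Rk (E := E) ?_) _
    by_contra hc
    exact h (hg i (not_lt.1 hc))

lemma pbw_mem_DRk (g : Fin N → ℕ) (k : ℕ) (hg : ∀ i : Fin N, k ≤ (i : ℕ) → g i = 0) :
    E.pbw g ∈ DRk K D E.x k := by
  rw [E.pbw_eq]
  unfold oMono
  apply Subring.list_prod_mem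
  intro r hr
  obtain ⟨i, -, rfl⟩ := List.mem_map.1 hr
  by_cases h : g i = 0
  · rw [h, pow_zero]; exact one_mem _
  · refine pow_mem (x_mem_DRk (E := E) (D := D) ?_) _
    by_contra hc
    exact h (hg i (not_lt.1 hc))

lemma pbw_mem_DRfull (g : Fin N → ℕ) : E.pbw g ∈ DRfull K D E.x := by
  rw [E.pbw_eq]
  unfold oMono
  apply Subring.list_prod_mem
  intro r hr
  obtain ⟨i, -, rfl⟩ := List.mem_map.1 hr
  exact pow_mem (x_mem_DRfull (E := E) (D := D) i) _

lemma mem_DRfull_of_DCf {r : R} (h : DCf E D r) : r ∈ DRfull K D E.x := by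
  rw [← sum_repr (E := E) r]
  apply sum_mem
  intro f _
  show E.pbw.repr r f • E.pbw f ∈ DRfull K D E.x
  rw [Algebra.smul_def]
  exact mul_mem (algebraMap_mem_DRfull (E := E) (h f)) (pbw_mem_DRfull f)

lemma DRfull_eq_DRkN : DRfull K D E.x = DRk K D E.x N := by
  unfold DRfull DRk Dspan
  congr 1
  ext r
  simp only [Set.mem_union, Set.mem_setOf_eq]
  constructor
  · rintro (h | ⟨i, -, rfl⟩)
    · exact Or.inl h
    · exact Or.inr ⟨i, i.isLt, rfl⟩
  · rintro (h | ⟨i, -, rfl⟩)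
    · exact Or.inl h
    · exact Or.inr ⟨i, trivial, rfl⟩

/-! ### The automorphisms `θ_k` on monomials -/

lemma theta_map_zero (κ : Fin N) : E.θ κ 0 = 0 := by
  have h := E.θ_linear κ 1 0 (zero_mem _) 0 (zero_mem _)
  simp only [smul_zero, add_zero, one_smul] at h
  have h2 : E.θ κ 0 + 0 = E.θ κ 0 + E.θ κ 0 := by rw [add_zero, ← h]
  exact (add_left_cancel h2).symm

lemma delta_map_zero (κ : Fin N) : E.δ κ 0 = 0 := by
  have h := E.δ_linear κ 1 0 (zero_mem _) 0 (zero_mem _)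
  simp only [smul_zero, add_zero, one_smul] at h
  have h2 : E.δ κ 0 + 0 = E.δ κ 0 + E.δ κ 0 := by rw [add_zero, ← h]
  exact (add_left_cancel h2).symm

lemma theta_smul (κ : Fin N) (s : K) {a : R} (ha : a ∈ Rk K E.x (κ : ℕ)) :
    E.θ κ (s • a) = s • E.θ κ a := by
  have h := E.θ_linear κ s a ha 0 (zero_mem _)
  simpa [theta_map_zero] using h

lemma smul_list_prod {ι : Type} (l : List ι) (c : ι → K) (r : ι → R) :
    (l.map fun i => c i • r i).prod = (l.map c).prod • (l.map r).prod := by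
  induction l with
  | nil => simp
  | cons a t ih =>
    simp only [List.map_cons, List.prod_cons, ih]
    rw [smul_mul_assoc, mul_smul_comm, smul_smul]

/-- The scalar by which `θ_κ` acts on the monomial `x^g` (when `g` involves only
variables below `κ`). -/
lemma lamM_unitIn (hD : IsDForm D E) (κ : Fin N) {j : Fin N} (hj : (j : ℕ) < (κ : ℕ))
    (HBS : ∀ r ∈ DRk K D E.x (κ : ℕ), DCf E D r) :
    isUnitIn K D ((E.lamM κ j : Kˣ) : K) := by
  set lam : K := ((E.lamM κ j : Kˣ) : K) with hlam
  have hlne : lam ≠ 0 := Units.ne_zero _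
  have hxRk : E.x j ∈ Rk K E.x (κ : ℕ) := x_mem_Rk (E := E) hj
  have hxD : E.x j ∈ DRk K D E.x (κ : ℕ) := x_mem_DRk (E := E) (D := D) hj
  have h1 : E.θ κ (E.x j) = lam • E.x j := by
    rw [← E.hElt_theta κ _ hxRk, E.lamM_spec κ j hj]
  have hej : E.pbw.repr (E.x j) (fun l => if l = j then 1 else 0) = 1 := by
    rw [x_eq_pbw (E := E) j, E.pbw.repr_self, Finsupp.single_apply, if_pos rfl]
  constructor
  · have h2 := HBS _ (hD.theta_mem κ _ hxRk hxD) (fun l => if l = j then 1 else 0)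
    rw [h1, map_smul, Finsupp.smul_apply, hej, smul_eq_mul, mul_one] at h2
    exact h2
  refine ⟨hlne, ?_⟩
  · have h3 : E.θ κ (lam⁻¹ • E.x j) = E.x j := by
      rw [theta_smul (E := E) κ _ hxRk, h1, smul_smul, inv_mul_cancel₀ hlne, one_smul]
    have h4 : E.θinv κ (E.x j) = lam⁻¹ • E.x j := by
      conv_lhs => rw [← h3]
      exact E.θ_left_inv κ _ (Subalgebra.smul_mem _ hxRk _)
    have h5 := HBS _ (hD.thetainv_mem κ _ hxRk hxD) (fun l => if l = j then 1 else 0)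
    rw [h4, map_smul, Finsupp.smul_apply, hej, smul_eq_mul, mul_one] at h5
    exact h5

lemma theta_pbw (hD : IsDForm D E) (κ : Fin N)
    (HBS : ∀ r ∈ DRk K D E.x (κ : ℕ), DCf E D r) (g : Fin N → ℕ)
    (hg : ∀ i : Fin N, (κ : ℕ) ≤ (i : ℕ) → g i = 0) :
    ∃ μ : K, isUnitIn K D μ ∧ E.θ κ (E.pbw g) = μ • E.pbw g := by
  have hmem : E.pbw g ∈ Rk K E.x (κ : ℕ) := pbw_mem_Rk (E := E) g _ hg
  refine ⟨((List.finRange N).map fun i => ((E.lamM κ i : Kˣ) : K) ^ g i).prod, ?_, ?_⟩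
  · apply isUnitIn_listprod
    intro a ha
    obtain ⟨i, -, rfl⟩ := List.mem_map.1 ha
    by_cases h : g i = 0
    · rw [h, pow_zero]; exact isUnitIn_one
    · have hi : (i : ℕ) < (κ : ℕ) := by
        by_contra hc
        exact h (hg i (not_lt.1 hc))
      exact isUnitIn_pow (lamM_unitIn (E := E) hD κ hi HBS) _
  · rw [← E.hElt_theta κ _ hmem]
    conv_lhs => rw [E.pbw_eq]
    conv_rhs => rw [E.pbw_eq]
    unfold oMono
    rw [map_list_prod, List.map_map]
    have hent : (⇑(E.act (E.hElt κ)) ∘ fun i => E.x i ^ g i)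
        = fun i => ((E.lamM κ i : Kˣ) : K) ^ g i • E.x i ^ g i := by
      funext i
      by_cases h : g i = 0
      · simp [Function.comp_apply, h]
      · have hi : (i : ℕ) < (κ : ℕ) := by
          by_contra hc
          exact h (hg i (not_lt.1 hc))
        rw [Function.comp_apply, map_pow, E.lamM_spec κ i hi, smul_pow]
    rw [hent, smul_list_prod]

lemma theta_iter_pbw (hD : IsDForm D E) (κ : Fin N)
    (HBS : ∀ r ∈ DRk K D E.x (κ : ℕ), DCf E D r) (g : Fin N → ℕ)
    (hg : ∀ i : Fin N, (κ : ℕ) ≤ (i : ℕ) → g i = 0) (n : ℕ) :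
    ∃ μ : K, isUnitIn K D μ ∧ (E.θ κ)^[n] (E.pbw g) = μ • E.pbw g := by
  obtain ⟨μ₀, hμ₀, hθ⟩ := theta_pbw (E := E) hD κ HBS g hg
  have hmem : E.pbw g ∈ Rk K E.x (κ : ℕ) := pbw_mem_Rk (E := E) g _ hg
  induction n with
  | zero => exact ⟨1, isUnitIn_one, by simp⟩
  | succ n ih =>
    obtain ⟨μ, hμ, hit⟩ := ih
    refine ⟨μ₀ * μ, isUnitIn_mul hμ₀ hμ, ?_⟩
    rw [Function.iterate_succ_apply', hit, theta_smul (E := E) κ _ hmem, hθ, smul_smul,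
      mul_comm μ μ₀]

/-! ### Commuting a power of `x_κ` past an element of `R_{κ-1}` -/

lemma pow_mul_expand (hD : IsDForm D E) (κ : Fin N) (n : ℕ) (b : R)
    (hb : b ∈ Rk K E.x (κ : ℕ)) (hb' : b ∈ DRk K D E.x (κ : ℕ)) :
    ∃ c : ℕ → R, (∀ i, c i ∈ Rk K E.x (κ : ℕ)) ∧ (∀ i, c i ∈ DRk K D E.x (κ : ℕ)) ∧
      c n = (E.θ κ)^[n] b ∧ (∀ i, n < i → c i = 0) ∧
      E.x κ ^ n * b = ∑ i ∈ Finset.range (n + 1), c i * E.x κ ^ i := by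
  induction n with
  | zero =>
    refine ⟨fun i => if i = 0 then b else 0, ?_, ?_, by simp, ?_, by simp⟩
    · intro i
      by_cases h : i = 0 <;> simp [h, hb, zero_mem]
    · intro i
      by_cases h : i = 0 <;> simp [h, hb', zero_mem]
    · intro i hi
      have : i ≠ 0 := by omega
      simp [this]
  | succ n ih =>
    obtain ⟨c, hcR, hcD, hcn, hcz, hcsum⟩ := ih
    refine ⟨fun i => (if i = 0 then 0 else E.θ κ (c (i - 1))) + E.δ κ (c i),
      ?_, ?_, ?_, ?_, ?_⟩
    · intro i
      apply add_mem
      · by_cases h : i = 0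
        · simp [h, zero_mem]
        · simp only [h, if_neg, ite_false]
          exact E.θ_mem κ _ (hcR _)
      · exact E.δ_mem κ _ (hcR _)
    · intro i
      apply add_mem
      · by_cases h : i = 0
        · simp [h, zero_mem]
        · simp only [h, if_neg, ite_false]
          exact hD.theta_mem κ _ (hcR _) (hcD _)
      · exact hD.delta_mem κ _ (hcR _) (hcD _)
    · show (if n + 1 = 0 then 0 else E.θ κ (c (n + 1 - 1))) + E.δ κ (c (n + 1))
        = (E.θ κ)^[n+1] b
      rw [if_neg (Nat.succ_ne_zero n), Nat.add_sub_cancel, hcn,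
        hcz (n+1) (Nat.lt_succ_self n), delta_map_zero, add_zero,
        Function.iterate_succ_apply']
    · intro i hi
      show (if i = 0 then 0 else E.θ κ (c (i - 1))) + E.δ κ (c i) = 0
      have hi0 : i ≠ 0 := by omega
      have h1 : c (i - 1) = 0 := hcz _ (by omega)
      have h2 : c i = 0 := hcz _ (by omega)
      rw [if_neg hi0, h1, h2, theta_map_zero, delta_map_zero, add_zero]
    · have hstep : ∀ i : ℕ, E.x κ * (c i * E.x κ ^ i)
          = E.θ κ (c i) * E.x κ ^ (i + 1) + E.δ κ (c i) * E.x κ ^ i := by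
        intro i
        rw [← mul_assoc, E.ore κ _ (hcR i), add_mul, mul_assoc, ← pow_succ']
      have hrhs : ∑ i ∈ Finset.range (n + 2),
            ((if i = 0 then 0 else E.θ κ (c (i - 1))) + E.δ κ (c i)) * E.x κ ^ i
          = (∑ i ∈ Finset.range (n + 1), E.θ κ (c i) * E.x κ ^ (i + 1))
            + ∑ i ∈ Finset.range (n + 1), E.δ κ (c i) * E.x κ ^ i := by
        have h1 : ∀ i : ℕ, ((if i = 0 then 0 else E.θ κ (c (i - 1))) + E.δ κ (c i)) * E.x κ ^ i
            = (if i = 0 then 0 else E.θ κ (c (i - 1))) * E.x κ ^ i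
              + E.δ κ (c i) * E.x κ ^ i := fun i => add_mul _ _ _
        simp only [h1]
        rw [Finset.sum_add_distrib]
        congr 1
        · rw [Finset.sum_range_succ']
          simp
        · rw [Finset.sum_range_succ, hcz (n + 1) (Nat.lt_succ_self n), delta_map_zero,
            zero_mul, add_zero]
      calc E.x κ ^ (n + 1) * b = E.x κ * (E.x κ ^ n * b) := by rw [pow_succ', mul_assoc]
        _ = E.x κ * ∑ i ∈ Finset.range (n + 1), c i * E.x κ ^ i := by rw [hcsum]
        _ = ∑ i ∈ Finset.range (n + 1),
              (E.θ κ (c i) * E.x κ ^ (i + 1) + E.δ κ (c i) * E.x κ ^ i) := by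
            rw [Finset.mul_sum]
            exact Finset.sum_congr rfl fun i _ => hstep i
        _ = ∑ i ∈ Finset.range (n + 2),
              ((if i = 0 then 0 else E.θ κ (c (i - 1))) + E.δ κ (c i)) * E.x κ ^ i := by
            rw [Finset.sum_add_distrib, hrhs]

/-! ### Support bounds for subring and subalgebra elements -/

lemma SLt_zero (k : ℕ) : SLt E k 0 := fun f hf => absurd (by simp) hf

lemma SLt_add {k : ℕ} {a b : R} (ha : SLt E k a) (hb : SLt E k b) : SLt E k (a + b) := by
  intro f hf i hi
  rw [map_add, Finsupp.add_apply] at hf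
  by_cases h : E.pbw.repr a f = 0
  · rw [h, zero_add] at hf
    exact hb f hf i hi
  · exact ha f h i hi

lemma SLt_smul {k : ℕ} (c : K) {a : R} (ha : SLt E k a) : SLt E k (c • a) := by
  intro f hf i hi
  rw [map_smul, Finsupp.smul_apply, smul_eq_mul] at hf
  exact ha f (right_ne_zero_of_mul hf) i hi

lemma mul_propD {P : R → Prop} (h0 : P 0) (hadd : ∀ a b : R, P a → P b → P (a + b))
    (hsm : ∀ c : K, c ∈ D → ∀ r : R, P r → P (c • r)) (a b : R)
    (ha : DCf E D a) (hb : DCf E D b)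
    (hab : ∀ f g, E.pbw.repr a f ≠ 0 → E.pbw.repr b g ≠ 0 → P (E.pbw f * E.pbw g)) :
    P (a * b) := by
  rw [mul_expand (E := E) a b]
  apply Finset.sum_induction _ _ hadd h0
  intro f hf
  apply Finset.sum_induction _ _ hadd h0
  intro g hg
  exact hsm _ (mul_mem (ha f) (hb g)) _
    (hab f g (Finsupp.mem_support_iff.1 hf) (Finsupp.mem_support_iff.1 hg))

lemma BS_of_mul (k : ℕ)
    (hM : ∀ f g : Fin N → ℕ, (∀ i : Fin N, k ≤ (i : ℕ) → f i = 0) →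
      (∀ i : Fin N, k ≤ (i : ℕ) → g i = 0) → LeadU E D (f + g) (E.pbw f * E.pbw g)) :
    ∀ r ∈ DRk K D E.x k, DCf E D r ∧ SLt E k r := by
  intro r hr
  unfold DRk Dspan at hr
  induction hr using Subring.closure_induction with
  | mem u hu =>
    rcases hu with ⟨t, ht, rfl⟩ | ⟨i, hi, rfl⟩
    · constructor
      · intro f
        rw [repr_algebraMap (E := E) t, Finsupp.single_apply]
        split
        · exact ht
        · exact D.zero_mem
      · intro f hf i _
        rw [repr_algebraMap (E := E) t, Finsupp.single_apply] at hf
        split at hf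
        · rw [← ‹(0 : Fin N → ℕ) = f›]
          rfl
        · exact absurd rfl hf
    · constructor
      · rw [x_eq_pbw (E := E) i]
        exact (LeadU_pbw (E := E) (D := D) _).1
      · intro f hf m hm
        rw [x_eq_pbw (E := E) i, E.pbw.repr_self, Finsupp.single_apply] at hf
        split at hf
        · rw [← ‹_ = f›]
          have : m ≠ i := by
            intro h
            subst h
            exact absurd (lt_of_lt_of_le hi hm) (lt_irrefl _)
          simp [this]
        · exact absurd rfl hf
  | zero => exact ⟨DCf_zero, SLt_zero k⟩
  | one =>
    constructor
    · intro f
      rw [← pbw_zero' E 0 (fun _ => rfl), E.pbw.repr_self, Finsupp.single_apply]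
      split
      · exact D.one_mem
      · exact D.zero_mem
    · intro f hf i _
      rw [← pbw_zero' E 0 (fun _ => rfl), E.pbw.repr_self, Finsupp.single_apply] at hf
      split at hf
      · rw [← ‹(0 : Fin N → ℕ) = f›]
        rfl
      · exact absurd rfl hf
  | add u v hu hv ihu ihv => exact ⟨DCf_add ihu.1 ihv.1, SLt_add ihu.2 ihv.2⟩
  | neg u hu ihu =>
    have h1 : (-1 : K) • u = -u := by simp
    rw [← h1]
    exact ⟨DCf_smul (neg_mem D.one_mem) ihu.1, SLt_smul _ ihu.2⟩
  | mul u v hu hv ihu ihv =>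
    apply mul_propD (E := E) (D := D) (P := fun u => DCf E D u ∧ SLt E k u)
      ⟨DCf_zero, SLt_zero k⟩
      (fun a b pa pb => ⟨DCf_add pa.1 pb.1, SLt_add pa.2 pb.2⟩)
      (fun c hc r pr => ⟨DCf_smul hc pr.1, SLt_smul c pr.2⟩) u v ihu.1 ihv.1
    intro f g hf hg
    have hfs : ∀ i : Fin N, k ≤ (i : ℕ) → f i = 0 := fun i hi => ihu.2 f hf i hi
    have hgs : ∀ i : Fin N, k ≤ (i : ℕ) → g i = 0 := fun i hi => ihv.2 g hg i hi
    have hlead := hM f g hfs hgs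
    refine ⟨hlead.1, ?_⟩
    intro e he i hi
    refine rll_supp (hlead.2.1 e he) ?_ i hi
    intro m hm
    show f m + g m = 0
    rw [hfs m hm, hgs m hm]

lemma S_of_mul (k : ℕ)
    (hM : ∀ f g : Fin N → ℕ, ∀ e, E.pbw.repr (E.pbw f * E.pbw g) e ≠ 0 → rll e (f + g)) :
    ∀ r ∈ Rk K E.x k, SLt E k r := by
  intro r hr
  unfold Rk xAdj at hr
  induction hr using Algebra.adjoin_induction with
  | mem u hu =>
    obtain ⟨i, hi, rfl⟩ := hu
    intro f hf m hm
    rw [x_eq_pbw (E := E) i, E.pbw.repr_self, Finsupp.single_apply] at hf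
    split at hf
    · rw [← ‹_ = f›]
      have : m ≠ i := by
        intro h
        subst h
        exact absurd (lt_of_lt_of_le hi hm) (lt_irrefl _)
      simp [this]
    · exact absurd rfl hf
  | algebraMap t =>
    intro f hf i _
    rw [repr_algebraMap (E := E) t, Finsupp.single_apply] at hf
    split at hf
    · rw [← ‹(0 : Fin N → ℕ) = f›]
      rfl
    · exact absurd rfl hf
  | add u v hu hv ihu ihv => exact SLt_add ihu ihv
  | mul u v hu hv ihu ihv =>
    apply mul_prop (E := E) (P := SLt E k) (SLt_zero k) (fun a b => SLt_add)
      (fun c r => SLt_smul c) u v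
    intro f g hf hg
    intro e he i hi
    refine rll_supp (hM f g e he) ?_ i hi
    intro m hm
    show f m + g m = 0
    rw [ihu f hf m hm, ihv g hg m hm]

/-! ### The key multiplication lemma -/

lemma MUL (hD : IsDForm D E) : ∀ k : ℕ, ∀ f g : Fin N → ℕ,
    (∀ i : Fin N, k ≤ (i : ℕ) → f i = 0) → (∀ i : Fin N, k ≤ (i : ℕ) → g i = 0) →
    LeadU E D (f + g) (E.pbw f * E.pbw g) := by
  intro k
  induction k with
  | zero =>
    intro f g hf hg
    have hg0 : E.pbw g = 1 := pbw_zero' E g (fun i => hg i (Nat.zero_le _))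
    have hfg : f + g = f := by
      funext i
      show f i + g i = f i
      rw [hg i (Nat.zero_le _), add_zero]
    rw [hg0, mul_one, hfg]
    exact LeadU_pbw f
  | succ k ih =>
    intro f g hf hg
    by_cases hkN : k < N
    case neg =>
      exact ih f g (fun i hi => absurd (lt_of_lt_of_le i.isLt (not_lt.1 hkN)) (not_lt.2 hi))
        (fun i hi => absurd (lt_of_lt_of_le i.isLt (not_lt.1 hkN)) (not_lt.2 hi))
    case pos =>
    set κ : Fin N := ⟨k, hkN⟩ with hκ
    have HBS : ∀ r ∈ DRk K D E.x k, DCf E D r ∧ SLt E k r := BS_of_mul k ih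
    set f' : Fin N → ℕ := Function.update f κ 0 with hf'def
    set g' : Fin N → ℕ := Function.update g κ 0 with hg'def
    have hupd : ∀ (u : Fin N → ℕ), (∀ i : Fin N, k + 1 ≤ (i : ℕ) → u i = 0) →
        ∀ j : Fin N, (κ : ℕ) ≤ (j : ℕ) → Function.update u κ 0 j = 0 := by
      intro u hu j hj
      by_cases h : j = κ
      · subst h; simp
      · rw [Function.update_of_ne h]
        have hjk : (j : ℕ) ≠ k := fun hc => h (Fin.ext hc)
        have : (κ : ℕ) ≤ (j : ℕ) := hj
        exact hu j (by simp only [hκ] at this ⊢; omega)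
    have hf'supp : ∀ j : Fin N, (κ : ℕ) ≤ (j : ℕ) → f' j = 0 := hupd f hf
    have hg'supp : ∀ j : Fin N, (κ : ℕ) ≤ (j : ℕ) → g' j = 0 := hupd g hg
    have hf'suppk : ∀ j : Fin N, k ≤ (j : ℕ) → f' j = 0 := fun j hj => hf'supp j hj
    have hg'suppk : ∀ j : Fin N, k ≤ (j : ℕ) → g' j = 0 := fun j hj => hg'supp j hj
    have hf'suppκ : ∀ j : Fin N, κ ≤ j → f' j = 0 := fun j hj => hf'supp j (Fin.le_def.1 hj)
    have hg'suppκ : ∀ j : Fin N, κ ≤ j → g' j = 0 := fun j hj => hg'supp j (Fin.le_def.1 hj)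
    have hsplitf : E.pbw f = E.pbw f' * E.x κ ^ (f κ) := by
      rw [pbw_mul_pow E f' κ (f κ) hf'suppκ]
      congr 1
      funext j
      by_cases h : j = κ
      · subst h; simp [hf'def]
      · simp [hf'def, Function.update_of_ne h, h]
    have hsplitg : E.pbw g = E.pbw g' * E.x κ ^ (g κ) := by
      rw [pbw_mul_pow E g' κ (g κ) hg'suppκ]
      congr 1
      funext j
      by_cases h : j = κ
      · subst h; simp [hg'def]
      · simp [hg'def, Function.update_of_ne h, h]
    have hg'Rk : E.pbw g' ∈ Rk K E.x (κ : ℕ) := pbw_mem_Rk (E := E) g' _ hg'supp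
    have hg'DRk : E.pbw g' ∈ DRk K D E.x (κ : ℕ) := pbw_mem_DRk (E := E) g' _ hg'supp
    obtain ⟨c, hcR, hcD, hca, hcz, hcsum⟩ :=
      pow_mul_expand (E := E) (D := D) hD κ (f κ) (E.pbw g') hg'Rk hg'DRk
    have key : E.pbw f * E.pbw g
        = ∑ i ∈ Finset.range (f κ + 1), E.pbw f' * c i * E.x κ ^ (i + g κ) := by
      rw [hsplitf, hsplitg, mul_assoc, ← mul_assoc (E.x κ ^ (f κ)), hcsum,
        Finset.sum_mul, Finset.mul_sum]
      apply Finset.sum_congr rfl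
      intro i _
      rw [mul_assoc (c i), ← pow_add, ← mul_assoc]
    have hflead : LeadU E D (f' + g') (E.pbw f' * E.pbw g') := ih f' g' hf'suppk hg'suppk
    obtain ⟨μ, hμ, hθ⟩ :=
      theta_iter_pbw (E := E) (D := D) hD κ (fun r hr => (HBS r hr).1) g' hg'supp (f κ)
    have hterm_a : LeadU E D (f + g) (E.pbw f' * c (f κ) * E.x κ ^ (f κ + g κ)) := by
      rw [hca, hθ, mul_smul_comm, smul_mul_assoc]
      have h1 : LeadU E D ((f' + g') + fun j => if j = κ then f κ + g κ else 0)
          ((E.pbw f' * E.pbw g') * E.x κ ^ (f κ + g κ)) := by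
        apply LeadU_shift κ (f κ + g κ) ?_ hflead
        intro i hi
        show f' i + g' i = 0
        rw [hf'supp i hi, hg'supp i hi]
      have heq : (f' + g') + (fun j => if j = κ then f κ + g κ else 0) = f + g := by
        funext j
        show f' j + g' j + _ = f j + g j
        by_cases h : j = κ
        · subst h; simp [hf'def, hg'def]
        · simp [hf'def, hg'def, Function.update_of_ne h, h]
      rw [heq] at h1
      exact LeadU_smul hμ h1
    have hterm_lt : ∀ i ∈ Finset.range (f κ),
        SLowD E D (f + g) (E.pbw f' * c i * E.x κ ^ (i + g κ)) := by
      intro i hi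
      have hia : i < f κ := Finset.mem_range.1 hi
      obtain ⟨hcDC, hcS⟩ := HBS _ (hcD i)
      have hr : DCf E D (E.pbw f' * c i) ∧ SLt E k (E.pbw f' * c i) := by
        apply mul_propD (E := E) (D := D) (P := fun u => DCf E D u ∧ SLt E k u)
          ⟨DCf_zero, SLt_zero k⟩ (fun a b pa pb => ⟨DCf_add pa.1 pb.1, SLt_add pa.2 pb.2⟩)
          (fun c hc r pr => ⟨DCf_smul hc pr.1, SLt_smul c pr.2⟩) _ _
          (LeadU_pbw f').1 hcDC
        intro f₁ g₁ hf₁ hg₁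
        have hf₁' : f₁ = f' := by
          rw [E.pbw.repr_self, Finsupp.single_apply] at hf₁
          split at hf₁
          · exact (‹f' = f₁›).symm
          · exact absurd rfl hf₁
        subst hf₁'
        have hg₁s : ∀ m : Fin N, k ≤ (m : ℕ) → g₁ m = 0 := fun m hm => hcS g₁ hg₁ m hm
        have hl := ih f' g₁ hf'suppk hg₁s
        refine ⟨hl.1, ?_⟩
        intro e he m hm
        refine rll_supp (hl.2.1 e he) ?_ m hm
        intro m' hm'
        show f' m' + g₁ m' = 0
        rw [hf'suppk m' hm', hg₁s m' hm']
      apply SLowD_shift κ (i + g κ) (f + g) hr.1 hr.2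
      · intro j hj
        show f j + g j = 0
        have : k < (j : ℕ) := hj
        rw [hf j (by omega), hg j (by omega)]
      · show i + g κ < f κ + g κ
        exact Nat.add_lt_add_right hia _
    have hfinal := LeadU_add_SLowD hterm_a (SLowD_sum (Finset.range (f κ)) _ hterm_lt)
    rw [key, Finset.sum_range_succ,
      add_comm (∑ i ∈ Finset.range (f κ), E.pbw f' * c i * E.x κ ^ (i + g κ))]
    exact hfinal

lemma MUL_all (hD : IsDForm D E) (f g : Fin N → ℕ) :
    LeadU E D (f + g) (E.pbw f * E.pbw g) :=
  MUL hD N f g (fun i hi => absurd i.isLt (not_lt.2 hi))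
    (fun i hi => absurd i.isLt (not_lt.2 hi))

lemma rll_bound_mul (hD : IsDForm D E) {w w' : Fin N → ℕ} {r r' : R}
    (hr : ∀ f, E.pbw.repr r f ≠ 0 → rll f w) (hr' : ∀ g, E.pbw.repr r' g ≠ 0 → rll g w') :
    ∀ e, E.pbw.repr (r * r') e ≠ 0 → rll e (w + w') := by
  apply mul_prop (E := E) (P := fun u => ∀ e, E.pbw.repr u e ≠ 0 → rll e (w + w'))
  · intro e he
    exact absurd (by simp) he
  · intro a b pa pb e he
    rw [map_add, Finsupp.add_apply] at he
    by_cases hh : E.pbw.repr a e = 0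
    · rw [hh, zero_add] at he
      exact pb e he
    · exact pa e hh
  · intro c u pu e he
    rw [map_smul, Finsupp.smul_apply, smul_eq_mul] at he
    exact pu e (right_ne_zero_of_mul he)
  · intro f g hf hg e he
    exact rll_trans ((MUL_all hD f g).2.1 e he) (rll_add (hr f hf) (hr' g hg))

lemma repr_eq_zero_of_rll_lt {v w : Fin N → ℕ} {u : R}
    (hb : ∀ e, E.pbw.repr u e ≠ 0 → rll e w) (hlt : revLexLt w v) :
    E.pbw.repr u v = 0 := by
  by_contra hc
  rcases hb v hc with heq | h
  · exact revLexLt_irrefl _ (heq ▸ hlt)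
  · exact revLexLt_irrefl _ (revLexLt_trans h hlt)

lemma LeadU_mul (hD : IsDForm D E) {w w' : Fin N → ℕ} {r r' : R}
    (h : LeadU E D w r) (h' : LeadU E D w' r') : LeadU E D (w + w') (r * r') := by
  have hDCm : DCf E D (r * r') := by
    apply mul_propD (E := E) (D := D) (P := DCf E D) DCf_zero (fun a b => DCf_add)
      (fun c hc u => DCf_smul hc) r r' h.1 h'.1
    intro f g _ _
    exact (MUL_all hD f g).1
  have hbd := rll_bound_mul (E := E) (D := D) hD h.2.1 h'.2.1
  refine ⟨hDCm, hbd, ?_⟩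
  have hcoord : E.pbw.repr (r * r') (w + w')
      = E.pbw.repr r w * (E.pbw.repr r' w'
          * E.pbw.repr (E.pbw w * E.pbw w') (w + w')) := by
    rw [repr_mul_left (E := E) r r' (w + w')]
    rw [Finsupp.sum]
    rw [Finset.sum_eq_single w]
    · congr 1
      rw [repr_mul_right (E := E) (E.pbw w) r' (w + w')]
      rw [Finsupp.sum]
      rw [Finset.sum_eq_single w']
      · intro g hg hgne
        have hgw : revLexLt g w' := by
          rcases h'.2.1 g (Finsupp.mem_support_iff.1 hg) with heq | hlt
          · exact absurd heq hgne
          · exact hlt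
        have hz : E.pbw.repr (E.pbw w * E.pbw g) (w + w') = 0 :=
          repr_eq_zero_of_rll_lt (E := E) (MUL_all hD w g).2.1 (revLexLt_add_left hgw w)
        rw [hz, mul_zero]
      · intro hns
        rw [Finsupp.notMem_support_iff.1 hns, zero_mul]
    · intro f hf hfne
      have hfw : revLexLt f w := by
        rcases h.2.1 f (Finsupp.mem_support_iff.1 hf) with heq | hlt
        · exact absurd heq hfne
        · exact hlt
      have hz : E.pbw.repr (E.pbw f * r') (w + w') = 0 := by
        apply repr_eq_zero_of_rll_lt (E := E)
          (rll_bound_mul (E := E) (D := D) hD (w := f) (w' := w')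
            (LeadU_pbw (E := E) (D := D) f).2.1 h'.2.1)
          (revLexLt_add_right hfw w')
      rw [hz, mul_zero]
    · intro hns
      rw [Finsupp.notMem_support_iff.1 hns, zero_mul]
  rw [hcoord]
  exact isUnitIn_mul h.2.2 (isUnitIn_mul h'.2.2 (MUL_all hD w w').2.2)

/-! ### Leading terms of the homogeneous prime elements `y_k` -/

lemma Ylead (hD : IsDForm D E) (Y : YSystem E) (hy : ∀ k : Fin N, Y.y k ∈ DRfull K D E.x) :
    ∀ k : Fin N, ∃ w : Fin N → ℕ, (∀ i : Fin N, (k : ℕ) < (i : ℕ) → w i = 0) ∧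
      LeadU E D w (Y.y k) := by
  have hDCfull : ∀ r ∈ DRfull K D E.x, DCf E D r := by
    intro r hr
    rw [DRfull_eq_DRkN (E := E) (D := D)] at hr
    exact (BS_of_mul N (fun f g hf hg => MUL hD N f g hf hg) r hr).1
  have hSk : ∀ k : ℕ, ∀ r ∈ Rk K E.x k, SLt E k r :=
    fun k => S_of_mul k (fun f g e he => (MUL_all hD f g).2.1 e he)
  suffices H : ∀ n : ℕ, ∀ k : Fin N, (k : ℕ) = n → ∃ w : Fin N → ℕ,
      (∀ i : Fin N, (k : ℕ) < (i : ℕ) → w i = 0) ∧ LeadU E D w (Y.y k) by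
    intro k
    exact H k k rfl
  intro n
  induction n using Nat.strong_induction_on with
  | _ n ih =>
    rintro k rfl
    rcases hp : predIdx Y.η k with _ | j
    · refine ⟨fun j => if j = k then 1 else 0, ?_, ?_⟩
      · intro i hi
        have : i ≠ k := fun h => absurd (h ▸ hi) (lt_irrefl _)
        simp [this]
      · rw [Y.y_base k hp, x_eq_pbw (E := E) k]
        exact LeadU_pbw _
    · have hp2 : (Finset.univ.filter
          (fun l : Fin N => (l : ℕ) < (k : ℕ) ∧ Y.η l = Y.η k)).max = ↑j := by
        unfold predIdx at hp
        exact_mod_cast hp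
      have hjmem : j ∈ Finset.univ.filter
          (fun l : Fin N => (l : ℕ) < (k : ℕ) ∧ Y.η l = Y.η k) :=
        Finset.mem_of_max hp2
      have hjk : (j : ℕ) < (k : ℕ) := (Finset.mem_filter.1 hjmem).2.1
      obtain ⟨w, hwsupp, hwl⟩ := ih (j : ℕ) hjk j rfl
      have hrec := Y.y_rec k j hp
      have hstep : LeadU E D (w + fun l => if l = k then 1 else 0) (Y.y j * E.x k) := by
        have h1 := LeadU_shift (E := E) (D := D) k 1
          (fun i hi => hwsupp i (lt_of_lt_of_le hjk hi)) hwl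
        rwa [pow_one] at h1
      have hck : SLowD E D (w + fun l => if l = k then 1 else 0) (Y.c k) := by
        have hDCc : DCf E D (Y.c k) := by
          have hc : Y.c k = Y.y j * E.x k - Y.y k := by
            rw [hrec, sub_sub_cancel]
          rw [hc]
          exact hDCfull _ (sub_mem (mul_mem (hy j) (x_mem_DRfull (E := E) (D := D) k)) (hy k))
        have hSc : SLt E (k : ℕ) (Y.c k) := hSk _ _ (Y.c_mem k)
        refine ⟨hDCc, ?_⟩
        intro e he
        apply slow_basic k
        · intro i hi
          exact hSc e he i (le_of_lt hi)
        · intro i hi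
          have hik : i ≠ k := fun h => absurd (h ▸ hi) (lt_irrefl _)
          show w i + (if i = k then 1 else 0) = 0
          rw [hwsupp i (lt_trans hjk hi), if_neg hik]
        · show e k < w k + (if k = k then 1 else 0)
          rw [hSc e he k le_rfl, hwsupp k hjk, if_pos rfl]
          exact Nat.zero_lt_one
      refine ⟨w + fun l => if l = k then 1 else 0, ?_, ?_⟩
      · intro i hi
        have hik : i ≠ k := fun h => absurd (h ▸ hi) (lt_irrefl _)
        show w i + (if i = k then 1 else 0) = 0
        rw [hwsupp i (lt_trans hjk hi), if_neg hik]
      · rw [hrec]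
        exact LeadU_sub_SLowD hstep hck

/-! ### Dividing by `y_κ` -/

lemma div_step (hD : IsDForm D E) (Y : YSystem E) (hy : ∀ k : Fin N, Y.y k ∈ DRfull K D E.x)
    (κ : Fin N) : ∀ r : R, DCf E D (r * Y.y κ) → DCf E D r := by
  obtain ⟨w, hwsupp, hwl⟩ := Ylead (E := E) (D := D) hD Y hy κ
  suffices H : ∀ n : ℕ, ∀ r : R, (E.pbw.repr r).support.card ≤ n →
      DCf E D (r * Y.y κ) → DCf E D r by
    intro r
    exact H _ r le_rfl
  intro n
  induction n with
  | zero =>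
    intro r hcard _
    have h0 : E.pbw.repr r = 0 := by
      rw [← Finsupp.support_eq_empty]
      exact Finset.card_eq_zero.1 (le_antisymm hcard (Nat.zero_le _))
    intro f
    rw [h0]
    exact D.zero_mem
  | succ n ihn =>
    intro r hcard hra
    by_cases h0 : E.pbw.repr r = 0
    · intro f
      rw [h0]
      exact D.zero_mem
    · obtain ⟨f, hfs, hfmax⟩ := exists_rll_max _ (Finsupp.support_nonempty_iff.2 h0)
      set cf := E.pbw.repr r f with hcf
      set v := E.pbw.repr (E.pbw f * Y.y κ) (f + w) with hv
      have hvunit : isUnitIn K D v :=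
        (LeadU_mul (E := E) (D := D) hD (LeadU_pbw f) hwl).2.2
      have hcoord : E.pbw.repr (r * Y.y κ) (f + w) = cf * v := by
        rw [repr_mul_left (E := E) r (Y.y κ) (f + w), Finsupp.sum]
        rw [Finset.sum_eq_single f]
        · intro e he hene
          have helt : revLexLt e f := by
            rcases hfmax e he with heq | hlt
            · exact absurd heq hene
            · exact hlt
          have hz : E.pbw.repr (E.pbw e * Y.y κ) (f + w) = 0 :=
            repr_eq_zero_of_rll_lt (E := E)
              (rll_bound_mul (E := E) (D := D) hD (w := e) (w' := w)
                (LeadU_pbw (E := E) (D := D) e).2.1 hwl.2.1)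
              (revLexLt_add_right helt w)
          rw [hz, mul_zero]
        · intro hns
          exact absurd hfs hns
      have hcfD : cf ∈ D := by
        have h1 : cf = E.pbw.repr (r * Y.y κ) (f + w) * v⁻¹ := by
          rw [hcoord, mul_assoc, mul_inv_cancel₀ hvunit.2.1, mul_one]
        rw [h1]
        exact mul_mem (hra (f + w)) hvunit.2.2
      set r' := r - cf • E.pbw f with hr'
      have hrepr' : ∀ e, E.pbw.repr r' e
          = E.pbw.repr r e - (if f = e then cf else 0) := by
        intro e
        rw [hr', map_sub, map_smul, Finsupp.sub_apply, E.pbw.repr_self,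
          Finsupp.smul_apply, Finsupp.single_apply, smul_eq_mul]
        congr 1
        split <;> simp
      have hsupp' : (E.pbw.repr r').support ⊆ (E.pbw.repr r).support.erase f := by
        intro e he
        have hne := Finsupp.mem_support_iff.1 he
        rw [hrepr' e] at hne
        have hef : e ≠ f := by
          intro hef
          apply hne
          rw [hef, if_pos rfl, hcf, sub_self]
        refine Finset.mem_erase.2 ⟨hef, Finsupp.mem_support_iff.2 ?_⟩
        intro hz
        apply hne
        rw [hz, if_neg (fun h => hef h.symm), sub_zero]
      have hcard' : (E.pbw.repr r').support.card ≤ n := by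
        have h1 := Finset.card_le_card hsupp'
        have h2 : ((E.pbw.repr r).support.erase f).card
            = (E.pbw.repr r).support.card - 1 := Finset.card_erase_of_mem hfs
        omega
      have hra' : DCf E D (r' * Y.y κ) := by
        have heq : r' * Y.y κ = r * Y.y κ - cf • (E.pbw f * Y.y κ) := by
          rw [hr', sub_mul, smul_mul_assoc]
        rw [heq]
        exact DCf_sub hra
          (DCf_smul hcfD (LeadU_mul (E := E) (D := D) hD (LeadU_pbw f) hwl).1)
      have hDCr' := ihn r' hcard' hra'
      intro e
      have h3 : E.pbw.repr r e = E.pbw.repr r' e + (if f = e then cf else 0) := by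
        rw [hrepr' e, sub_add_cancel]
      rw [h3]
      refine add_mem (hDCr' e) ?_
      split
      · exact hcfD
      · exact D.zero_mem

end LocAux


/-- **Proposition.** Let `R` be a CGL extension whose presentation has a `D`-form
`R_D = D⟨x_1,…,x_N⟩` containing `y_1,…,y_N`, and let `Y` be the multiplicative set
generated by `D^× ∪ {y_1,…,y_N}` (a denominator set in `R_D`). Then
`R_D[Y^{-1}] ∩ R = R_D` inside `R[Y^{-1}]`: the elements of `R` of the form
`a y^{-1}` (i.e. with `r y = a` for some `a ∈ R_D`, `y ∈ Y`) are precisely the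
elements of `R_D`. -/
theorem loc_intersection {K : Type} [Field K] {R : Type} [Ring R] [Algebra K R] {N : ℕ}
    (E : CGLExt K R N) (D : Subring K) (hD : IsDForm D E)
    (Y : YSystem E) (hy : ∀ k : Fin N, Y.y k ∈ DRfull K D E.x) :
    {r : R | ∃ a ∈ DRfull K D E.x,
        ∃ s ∈ Submonoid.closure
          ({r : R | ∃ t : K, isUnitIn K D t ∧ r = algebraMap K R t} ∪
            {r : R | ∃ k : Fin N, r = Y.y k}),
        r * s = a} =
      (DRfull K D E.x : Set R) := by
  have hDCfull : ∀ r ∈ DRfull K D E.x, DCf E D r := by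
    intro r hr
    rw [DRfull_eq_DRkN (E := E) (D := D)] at hr
    exact (BS_of_mul N (fun f g hf hg => MUL hD N f g hf hg) r hr).1
  have QS : ∀ z ∈ Submonoid.closure
      ({r : R | ∃ t : K, isUnitIn K D t ∧ r = algebraMap K R t} ∪
        {r : R | ∃ k : Fin N, r = Y.y k}),
      ∀ u : R, u * z ∈ DRfull K D E.x → u ∈ DRfull K D E.x := by
    intro z hz
    induction hz using Submonoid.closure_induction with
    | mem z hz =>
      rcases hz with ⟨t, htu, rfl⟩ | ⟨k, rfl⟩
      · obtain ⟨htD, htne, htinv⟩ := htu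
        intro u hu
        have h1 : (u * algebraMap K R t) * algebraMap K R t⁻¹ = u := by
          rw [mul_assoc, ← map_mul, mul_inv_cancel₀ htne, map_one, mul_one]
        rw [← h1]
        exact mul_mem hu (algebraMap_mem_DRfull (E := E) htinv)
      · intro u hu
        have h2 : DCf E D (u * Y.y k) := hDCfull _ hu
        exact mem_DRfull_of_DCf (E := E) (div_step (E := E) (D := D) hD Y hy k u h2)
    | one =>
      intro u hu
      rwa [mul_one] at hu
    | mul z z' hz hz' ihz ihz' =>
      intro u hu
      rw [← mul_assoc] at hu
      exact ihz u (ihz' (u * z) hu)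
  ext r
  simp only [Set.mem_setOf_eq, SetLike.mem_coe]
  constructor
  · rintro ⟨a, ha, s, hs, heq⟩
    exact QS s hs r (by rw [heq]; exact ha)
  · intro hr
    exact ⟨r, hr, 1, one_mem _, mul_one r⟩

end GYint
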